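/- In the rock-paper-scissors monad algebra 𝔐 over a field F of characteristic different from 2, for x = P + R − 2S one has (x²)² = 9(R − P) and x(x(x²)) = 9(P − R); in particular, if also char F ≠ 3, then (x²)² ≠ x(x(x²)), so the two degree-4 monomials define different polynomial functions on 𝔐. -/

import Mathlib

/-- The rock-paper-scissors monad algebra: coordinates w.r.t. the basis `{1, P, R, S}`. -/
def RPS (F : Type*) := F × F × F × F

namespace RPS

variable {F : Type*} [Field F]

instance : AddCommGroup (RPS F) := inferInstanceAs (AddCommGroup (F × F × F × F))
instance : Module F (RPS F) := inferInstanceAs (Module F (F × F × F × F))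

/-- Build the element `x0·1 + a·P + b·R + c·S`. -/
def mk4 (x0 a b c : F) : RPS F := (x0, a, b, c)

/-- Scalar part: coefficient of `1`. -/
def sc (x : RPS F) : F := x.1
/-- Coefficient of `P`. -/
def cP (x : RPS F) : F := x.2.1
/-- Coefficient of `R`. -/
def cR (x : RPS F) : F := x.2.2.1
/-- Coefficient of `S`. -/
def cS (x : RPS F) : F := x.2.2.2

instance : One (RPS F) := ⟨mk4 1 0 0 0⟩

/-- The commutative non-associative multiplication determined by: `1` is the unit,
`P, R, S` are idempotent, and `P·R = R·P = P`, `P·S = S·P = S`, `S·R = R·S = R`. -/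
instance : Mul (RPS F) :=
  ⟨fun x y => mk4 (sc x * sc y)
    (sc x * cP y + sc y * cP x + cP x * cP y + cP x * cR y + cR x * cP y)
    (sc x * cR y + sc y * cR x + cR x * cR y + cR x * cS y + cS x * cR y)
    (sc x * cS y + sc y * cS x + cS x * cS y + cP x * cS y + cS x * cP y)⟩

/-- The basis element `P`. -/
def eP : RPS F := mk4 0 1 0 0
/-- The basis element `R`. -/
def eR : RPS F := mk4 0 0 1 0
/-- The basis element `S`. -/
def eS : RPS F := mk4 0 0 0 1

/-- The trace homomorphism `tr(x0·1 + aP + bR + cS) = x0 + a + b + c`. -/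
def tr (x : RPS F) : F := sc x + cP x + cR x + cS x

/-- The linear map `φ` with `1 ↦ 1`, `P ↦ R`, `R ↦ S`, `S ↦ P`. -/
def phi (x : RPS F) : RPS F := mk4 (sc x) (cS x) (cP x) (cR x)

end RPS

open RPS in
/-- For `x = P + R − 2S` in `𝔐` over a field of characteristic `≠ 2`:
`(x²)² = 9(R − P)` and `x(x(x²)) = 9(P − R)`; if also `char F ≠ 3` these are distinct,
so the two degree-4 monomials define different polynomial functions. -/
theorem degree_four_monomials_differ {F : Type*} [Field F] (h2 : (2 : F) ≠ 0) :
    (((mk4 0 1 1 (-2) : RPS F) * mk4 0 1 1 (-2)) * ((mk4 0 1 1 (-2) : RPS F) * mk4 0 1 1 (-2)) =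
        (9 : F) • ((eR : RPS F) - eP)) ∧
    ((mk4 0 1 1 (-2) : RPS F) * ((mk4 0 1 1 (-2) : RPS F) *
        ((mk4 0 1 1 (-2) : RPS F) * mk4 0 1 1 (-2))) = (9 : F) • ((eP : RPS F) - eR)) ∧
    ((3 : F) ≠ 0 →
      ((mk4 0 1 1 (-2) : RPS F) * mk4 0 1 1 (-2)) * ((mk4 0 1 1 (-2) : RPS F) * mk4 0 1 1 (-2)) ≠
        (mk4 0 1 1 (-2) : RPS F) * ((mk4 0 1 1 (-2) : RPS F) *
          ((mk4 0 1 1 (-2) : RPS F) * mk4 0 1 1 (-2)))) := by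
  have hmul : ∀ x y : RPS F, x * y = mk4 (sc x * sc y)
      (sc x * cP y + sc y * cP x + cP x * cP y + cP x * cR y + cR x * cP y)
      (sc x * cR y + sc y * cR x + cR x * cR y + cR x * cS y + cS x * cR y)
      (sc x * cS y + sc y * cS x + cS x * cS y + cP x * cS y + cS x * cP y) := fun _ _ => rfl
  have hsmul : ∀ (a : F) (x : RPS F), a • x = mk4 (a * sc x) (a * cP x) (a * cR x) (a * cS x) := fun _ _ => rfl
  have hsub : ∀ x y : RPS F, x - y = mk4 (sc x - sc y) (cP x - cP y) (cR x - cR y) (cS x - cS y) := fun _ _ => rfl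
  refine ⟨?_, ?_, ?_⟩
  · simp only [hmul, hsub, hsmul]
    simp only [hmul, hsub, hsmul, mk4, sc, cP, cR, cS, eR, eP]
    norm_num
    rfl
  · simp only [hmul, hsub, hsmul]
    simp only [hmul, hsub, hsmul, mk4, sc, cP, cR, cS, eR, eP]
    norm_num
    rfl
  · intro h3 h
    have h1 := congrArg RPS.cP h
    simp only [hmul] at h1
    simp only [hmul, mk4, sc, cP, cR, cS] at h1
    norm_num at h1
    have h18 : (2 : F) * (3 * 3) = 0 := by linear_combination -h1
    rcases mul_eq_zero.mp h18 with h | h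
    · exact h2 h
    · exact h3 (by rcases mul_eq_zero.mp h with h | h <;> exact h)
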